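/- arXiv:2101.05009 — 2 statements merged into one kernel-verified Lean document; each statement's English description precedes it below -/
import Mathlib

section
/- Let (X_d, Y_d, Z_d) be a random vector taking values in a countable set, with finite joint entropy. Let Ĥ_n denote the plug-in empirical entropy computed from n i.i.d. samples. Then Ĥ_n(X_d,Y_d,Z_d) → H(X_d,Y_d,Z_d) almost surely as n → ∞. -/
open MeasureTheory ProbabilityTheory Filter

private lemma stmt14_integrable {S : Type*} [MeasurableSpace S] [Countable S]
    [MeasurableSingletonClass S] (ν : Measure S) [IsFiniteMeasure ν] (g : S → ℝ)
    (h : Summable (fun s => ‖g s‖ * (ν {s}).toReal)) : Integrable g ν := by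
  refine ⟨(measurable_of_countable g).aestronglyMeasurable, ?_⟩
  have key : ∫⁻ a, (‖g a‖₊ : ENNReal) ∂ν = ∑' a, (‖g a‖₊ : ENNReal) * ν {a} :=
    lintegral_countable' _
  have h2 : ∀ a : S, (‖g a‖₊ : ENNReal) * ν {a} = ENNReal.ofReal (‖g a‖ * (ν {a}).toReal) := by
    intro a
    rw [ENNReal.ofReal_mul (norm_nonneg _), ofReal_norm, enorm_eq_nnnorm,
      ENNReal.ofReal_toReal (measure_ne_top ν _)]
  rw [HasFiniteIntegral]; simp only [enorm_eq_nnnorm]; rw [key]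
  simp_rw [h2]
  rw [← ENNReal.ofReal_tsum_of_nonneg (fun a => mul_nonneg (norm_nonneg _) ENNReal.toReal_nonneg) h]
  exact ENNReal.ofReal_lt_top

private lemma stmt14_det {S : Type*} [DecidableEq S] (p : S → ℝ) (x : ℕ → S)
    (hpF : ∀ F : Finset S, ∑ s ∈ F, p s ≤ 1)
    (hx : ∀ i, 0 < p (x i))
    (hsum : Summable (fun s => p s * -Real.log (p s)))
    (hq : ∀ s, Tendsto (fun n : ℕ =>
        (((Finset.range n).filter (fun i => x i = s)).card : ℝ) / n) atTop (nhds (p s)))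
    (ha : Tendsto (fun n : ℕ => (n : ℝ)⁻¹ * ∑ i ∈ Finset.range n, -Real.log (p (x i)))
      atTop (nhds (∑' s, p s * -Real.log (p s)))) :
    Tendsto (fun n : ℕ => ∑' s : S,
        ((((Finset.range n).filter (fun i => x i = s)).card : ℝ) / n) *
          -Real.log ((((Finset.range n).filter (fun i => x i = s)).card : ℝ) / n))
      atTop (nhds (∑' s, p s * -Real.log (p s))) := by
  set q : ℕ → S → ℝ := fun n s => (((Finset.range n).filter (fun i => x i = s)).card : ℝ) / n
    with hq_def
  set F : ℕ → Finset S := fun n => (Finset.range n).image x with hF_def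
  have hsupp : ∀ n, ∀ s ∉ F n, q n s = 0 := by
    intro n s hs
    have : (Finset.range n).filter (fun i => x i = s) = ∅ := by
      refine Finset.filter_eq_empty_iff.2 fun i hi hxi => hs ?_
      exact hxi ▸ Finset.mem_image_of_mem x hi
    simp [hq_def, this]
  have hq0 : ∀ n s, 0 ≤ q n s := fun n s => div_nonneg (by positivity) (by positivity)
  have hq1 : ∀ n s, q n s ≤ 1 := by
    intro n s
    rcases Nat.eq_zero_or_pos n with h | h
    · simp [hq_def, h]
    · rw [hq_def, div_le_one (by exact_mod_cast h)]
      exact_mod_cast (Finset.card_filter_le _ _).trans_eq (Finset.card_range n)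
  have ht0 : ∀ n s, 0 ≤ q n s * -Real.log (q n s) := fun n s =>
    mul_nonneg (hq0 n s) (neg_nonneg.2 (Real.log_nonpos (hq0 n s) (hq1 n s)))
  have htsum : ∀ n, Summable (fun s => q n s * -Real.log (q n s)) := fun n =>
    summable_of_ne_finset_zero (s := F n) fun s hs => by rw [hsupp n s hs]; simp
  have hqpos : ∀ n, ∀ s ∈ F n, 0 < q n s := by
    intro n s hs
    obtain ⟨i, hi, rfl⟩ := Finset.mem_image.mp hs
    have h1 : i ∈ (Finset.range n).filter (fun j => x j = x i) := by
      simp [Finset.mem_filter, hi]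
    have hc : 0 < ((Finset.range n).filter (fun j => x j = x i)).card :=
      Finset.card_pos.2 ⟨i, h1⟩
    have hn : 0 < n := by
      have := Finset.mem_range.mp hi; omega
    exact div_pos (by exact_mod_cast hc) (by exact_mod_cast hn)
  have hppos : ∀ n, ∀ s ∈ F n, 0 < p s := by
    intro n s hs
    obtain ⟨i, _, rfl⟩ := Finset.mem_image.mp hs
    exact hx i
  have hsum_q : ∀ n, 1 ≤ n → ∑ s ∈ F n, q n s = 1 := by
    intro n hn
    have hcard : ∑ s ∈ F n, ((Finset.range n).filter (fun i => x i = s)).card = n := by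
      rw [← Finset.card_eq_sum_card_fiberwise (fun i hi => Finset.mem_image_of_mem x hi),
        Finset.card_range]
    have hn' : (n : ℝ) ≠ 0 := by positivity
    calc ∑ s ∈ F n, q n s
        = (↑(∑ s ∈ F n, ((Finset.range n).filter (fun i => x i = s)).card) : ℝ) / n := by
          rw [hq_def, ← Finset.sum_div, Nat.cast_sum]
      _ = 1 := by rw [hcard]; exact div_self hn'
  have hupper : ∀ n, 1 ≤ n → (∑' s, q n s * -Real.log (q n s)) ≤
      (n : ℝ)⁻¹ * ∑ i ∈ Finset.range n, -Real.log (p (x i)) := by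
    intro n hn
    rw [tsum_eq_sum (s := F n) (fun s hs => by rw [hsupp n s hs]; simp)]
    have hfib : ∑ s ∈ F n, (((Finset.range n).filter (fun i => x i = s)).card : ℝ) *
        -Real.log (p s) = ∑ i ∈ Finset.range n, -Real.log (p (x i)) := by
      rw [← Finset.sum_fiberwise_of_maps_to (fun i hi => Finset.mem_image_of_mem x hi)
        (fun i => -Real.log (p (x i)))]
      refine Finset.sum_congr rfl fun s _ => ?_
      have : ∀ i ∈ (Finset.range n).filter (fun i => x i = s),
          -Real.log (p (x i)) = -Real.log (p s) := by
        intro i hi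
        rw [(Finset.mem_filter.mp hi).2]
      rw [Finset.sum_congr rfl this, Finset.sum_const, nsmul_eq_mul]
    have step2 : ∑ s ∈ F n, q n s * -Real.log (p s) =
        (n : ℝ)⁻¹ * ∑ i ∈ Finset.range n, -Real.log (p (x i)) := by
      rw [← hfib, Finset.mul_sum]
      exact Finset.sum_congr rfl fun s _ => by rw [hq_def]; ring
    rw [← step2]
    have key : ∀ s ∈ F n, q n s * -Real.log (q n s) ≤ q n s * -Real.log (p s) + (p s - q n s) := by
      intro s hs
      have hqs := hqpos n s hs
      have hps := hppos n s hs
      have hlog : Real.log (p s / q n s) ≤ p s / q n s - 1 :=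
        Real.log_le_sub_one_of_pos (div_pos hps hqs)
      rw [Real.log_div hps.ne' hqs.ne'] at hlog
      have hmul := mul_le_mul_of_nonneg_left hlog hqs.le
      have hqp : q n s * (p s / q n s) = p s := by field_simp
      nlinarith [hmul, hqp]
    calc ∑ s ∈ F n, q n s * -Real.log (q n s)
        ≤ ∑ s ∈ F n, (q n s * -Real.log (p s) + (p s - q n s)) := Finset.sum_le_sum key
      _ = ∑ s ∈ F n, q n s * -Real.log (p s) + (∑ s ∈ F n, p s - ∑ s ∈ F n, q n s) := by
          rw [Finset.sum_add_distrib, Finset.sum_sub_distrib]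
      _ ≤ ∑ s ∈ F n, q n s * -Real.log (p s) := by
          have h1 := hpF (F n)
          have h2 := hsum_q n hn
          linarith
  have hlow : ∀ (A : Finset S) (n : ℕ),
      ∑ s ∈ A, q n s * -Real.log (q n s) ≤ ∑' s, q n s * -Real.log (q n s) :=
    fun A n => (htsum n).sum_le_tsum A (fun s _ => ht0 n s)
  have hAfin : ∀ A : Finset S, Tendsto (fun n => ∑ s ∈ A, q n s * -Real.log (q n s)) atTop
      (nhds (∑ s ∈ A, p s * -Real.log (p s))) := by
    intro A
    refine tendsto_finset_sum A fun s _ => ?_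
    have hc : Continuous (fun y : ℝ => y * -Real.log y) := by
      simp only [mul_neg]; exact Real.continuous_mul_log.neg
    exact (hc.tendsto (p s)).comp (hq s)
  refine tendsto_order.2 ⟨fun b hb => ?_, fun b hb => ?_⟩
  · obtain ⟨A, hA⟩ := (hsum.hasSum.eventually (Ioi_mem_nhds hb)).exists
    filter_upwards [(hAfin A).eventually (Ioi_mem_nhds hA)] with n hn
    exact lt_of_lt_of_le hn (hlow A n)
  · filter_upwards [ha.eventually (Iio_mem_nhds hb), eventually_ge_atTop 1] with n h1 h2
    exact lt_of_le_of_lt (hupper n h2) h1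

/-- For an i.i.d. sequence of discrete random elements (e.g. the vector
`(X_d,Y_d,Z_d)`) with values in a countable set and finite entropy, the plug-in empirical
entropy converges to the true entropy almost surely (convention `0 log 0 = 0`). -/
theorem stmt14 {Ω S : Type*} [MeasurableSpace Ω] [MeasurableSpace S]
    [Countable S] [MeasurableSingletonClass S] [DecidableEq S]
    (μ : Measure Ω) [IsProbabilityMeasure μ]
    (X : ℕ → Ω → S) (hX : ∀ i, Measurable (X i))
    (hindep : iIndepFun X μ)
    (hident : ∀ i, μ.map (X i) = μ.map (X 0))
    (hH : Summable (fun s : S =>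
      ((μ.map (X 0)) {s}).toReal * Real.log ((μ.map (X 0)) {s}).toReal)) :
    ∀ᵐ ω ∂μ, Tendsto (fun n : ℕ =>
        -∑' s : S, ((((Finset.range n).filter (fun i => X i ω = s)).card : ℝ) / n) *
          Real.log ((((Finset.range n).filter (fun i => X i ω = s)).card : ℝ) / n))
      atTop
      (nhds (-∑' s : S,
        ((μ.map (X 0)) {s}).toReal * Real.log ((μ.map (X 0)) {s}).toReal)) := by
  set ν : Measure S := μ.map (X 0) with hν
  haveI : IsProbabilityMeasure ν := Measure.isProbabilityMeasure_map (hX 0).aemeasurable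
  set p : S → ℝ := fun s => (ν {s}).toReal with hp
  have hpchange : ∀ s, ((μ.map (X 0)) {s}).toReal = p s := fun s => rfl
  have hpF : ∀ F : Finset S, ∑ s ∈ F, p s ≤ 1 := by
    intro F
    have h1 : ∑ s ∈ F, ν {s} = ν (↑F : Set S) := by
      rw [← measure_biUnion_finset (fun a _ b _ hab => by
          simpa [Set.disjoint_singleton] using hab)
        (fun b _ => measurableSet_singleton b)]
      congr 1
      ext y
      simp
    have : ∑ s ∈ F, p s = (ν (↑F : Set S)).toReal := by
      rw [hp, ← ENNReal.toReal_sum (fun a _ => measure_ne_top ν _), h1]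
    rw [this]
    calc (ν (↑F : Set S)).toReal ≤ (ν Set.univ).toReal :=
          ENNReal.toReal_mono (measure_ne_top ν _) (measure_mono (Set.subset_univ _))
      _ = 1 := by simp
  -- the log-weight function
  have hgmeas : Measurable (fun s : S => -Real.log (p s)) := measurable_of_countable _
  have hsum' : Summable (fun s => p s * -Real.log (p s)) := by
    simpa only [mul_neg] using hH.neg
  have habs : Summable (fun s => ‖-Real.log (p s)‖ * p s) := by
    have : (fun s => ‖-Real.log (p s)‖ * p s) = fun s => |p s * Real.log (p s)| := by
      funext s
      rw [Real.norm_eq_abs, abs_neg, abs_mul, abs_of_nonneg (ENNReal.toReal_nonneg), mul_comm]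
    rw [this]
    exact hH.abs
  have hgint_ν : Integrable (fun s : S => -Real.log (p s)) ν := stmt14_integrable ν _ habs
  have hident_i : ∀ i, IdentDistrib (X i) (X 0) μ μ := fun i =>
    ⟨(hX i).aemeasurable, (hX 0).aemeasurable, hident i⟩
  -- SLLN for -log p (X i)
  have hmean_g : (∫ ω, -Real.log (p (X 0 ω)) ∂μ) = ∑' s, p s * -Real.log (p s) := by
    rw [← integral_map (hX 0).aemeasurable hgmeas.aestronglyMeasurable, ← hν,
      integral_countable' hgint_ν]
    simp [smul_eq_mul, hp, measureReal_def]
  have hYint : Integrable (fun ω => -Real.log (p (X 0 ω))) μ := by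
    have := (integrable_map_measure hgmeas.aestronglyMeasurable (hX 0).aemeasurable).mp
      (hν ▸ hgint_ν)
    exact this
  have A2 : ∀ᵐ ω ∂μ, Tendsto
      (fun n : ℕ => (n : ℝ)⁻¹ * ∑ i ∈ Finset.range n, -Real.log (p (X i ω)))
      atTop (nhds (∑' s, p s * -Real.log (p s))) := by
    have := strong_law_ae (fun i ω => -Real.log (p (X i ω))) hYint
      (fun i j hij => (hindep.indepFun hij).comp hgmeas hgmeas)
      (fun i => (hident_i i).comp hgmeas)
    filter_upwards [this] with ω hω
    simpa [smul_eq_mul, hmean_g] using hω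
  -- SLLN for the empirical frequencies
  have A1 : ∀ s : S, ∀ᵐ ω ∂μ, Tendsto (fun n : ℕ =>
      (((Finset.range n).filter (fun i => X i ω = s)).card : ℝ) / n) atTop (nhds (p s)) := by
    intro s
    have hfmeas : Measurable (fun t : S => if t = s then (1 : ℝ) else 0) :=
      measurable_of_countable _
    have hbd : ∀ {i : ℕ}, ∀ᵐ ω ∂μ, ‖if X i ω = s then (1:ℝ) else 0‖ ≤ 1 := by
      intro i
      refine Filter.Eventually.of_forall fun ω => ?_
      by_cases h : X i ω = s <;> simp [h]
    have hint : Integrable (fun ω => if X 0 ω = s then (1:ℝ) else 0) μ :=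
      Integrable.mono' (integrable_const 1)
        ((hfmeas.comp (hX 0)).aestronglyMeasurable) hbd
    have hint_ν : Integrable (fun t : S => if t = s then (1:ℝ) else 0) ν :=
      Integrable.mono' (integrable_const 1) hfmeas.aestronglyMeasurable
        (Filter.Eventually.of_forall fun t => by by_cases h : t = s <;> simp [h])
    have hmean : (∫ ω, (if X 0 ω = s then (1:ℝ) else 0) ∂μ) = p s := by
      rw [← integral_map (hX 0).aemeasurable hfmeas.aestronglyMeasurable, ← hν,
        integral_countable' hint_ν,
        tsum_eq_single s (fun b hb => by simp [hb])]
      simp [hp, measureReal_def]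
    have := strong_law_ae (fun i ω => if X i ω = s then (1:ℝ) else 0) hint
      (fun i j hij => (hindep.indepFun hij).comp hfmeas hfmeas)
      (fun i => (hident_i i).comp hfmeas)
    filter_upwards [this] with ω hω
    have hcount : ∀ n : ℕ, ∑ i ∈ Finset.range n, (if X i ω = s then (1:ℝ) else 0)
        = (((Finset.range n).filter (fun i => X i ω = s)).card : ℝ) := by
      intro n
      rw [Finset.card_filter]
      push_cast
      rfl
    have hω' : Tendsto (fun n : ℕ =>
        (n : ℝ)⁻¹ * (((Finset.range n).filter (fun i => X i ω = s)).card : ℝ))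
        atTop (nhds (p s)) := by
      have := hω
      rw [hmean] at this
      simpa [smul_eq_mul, hcount] using this
    simpa [div_eq_inv_mul] using hω'
  have A1' : ∀ᵐ ω ∂μ, ∀ s : S, Tendsto (fun n : ℕ =>
      (((Finset.range n).filter (fun i => X i ω = s)).card : ℝ) / n) atTop (nhds (p s)) :=
    (MeasureTheory.ae_all_iff).2 A1
  -- a.s. all samples land in the support
  have A3 : ∀ᵐ ω ∂μ, ∀ i, 0 < p (X i ω) := by
    rw [MeasureTheory.ae_all_iff]
    intro i
    set N : Set S := {t | ν {t} = 0} with hN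
    have hNnull : ν N = 0 := by
      have : N = ⋃ t ∈ N, ({t} : Set S) := by
        rw [Set.biUnion_of_singleton]
      rw [this, MeasureTheory.measure_biUnion_null_iff (Set.to_countable N)]
      exact fun t ht => ht
    have hpre : μ ((X i) ⁻¹' N) = 0 := by
      rw [← Measure.map_apply (hX i) ((Set.to_countable N).measurableSet), hident i]
      exact hNnull
    have := (MeasureTheory.measure_eq_zero_iff_ae_notMem).1 hpre
    filter_upwards [this] with ω hω
    have : ν {X i ω} ≠ 0 := fun h => hω h
    exact ENNReal.toReal_pos this (measure_ne_top ν _)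
  filter_upwards [A1', A2, A3] with ω h1 h2 h3
  have H := stmt14_det p (fun i => X i ω) hpF h3 hsum' h1 h2
  simpa only [hpchange, mul_neg, tsum_neg] using H
end

section
/- The parametric complexity of a K-bin multinomial/histogram model, R(n,K) = Σ_{c_1+...+c_K = n} (n!/(c_1!···c_K!)) · ∏_{i=1}^K (c_i/n)^{c_i}, satisfies the recurrence R(n,K+2) = R(n,K+1) + (n/K) · R(n,K) for all K ≥ 1, with R(n,1) = 1. -/
open Finset



/-! ### Auxiliary development: the tree function and its EGF identities -/

/-- `tR k = k^(k-1)` for `k ≥ 1`, and `0` for `k = 0` (rooted-tree counts). -/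
noncomputable def tR : ℕ → ℝ := fun k => if k = 0 then 0 else (k : ℝ) ^ (k - 1)

/-- EGF coefficients of `A(z) = ∑ k^k z^k / k!`. -/
noncomputable def aS : ℕ → ℝ := fun k => (k : ℝ) ^ k / (k.factorial : ℝ)

/-- EGF coefficients of the tree function `T(z) = ∑ k^(k-1) z^k / k!`. -/
noncomputable def tS : ℕ → ℝ := fun k => tR k / (k.factorial : ℝ)

lemma aux_aS_zero : aS 0 = 1 := by norm_num [aS]
lemma aux_tS_zero : tS 0 = 0 := by norm_num [tS, tR]

/-- n-th finite difference of a monomial of degree < n vanishes. -/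
lemma aux_findiff (m : ℕ) : ∀ n : ℕ, m < n →
    ∑ k ∈ range (n + 1), (-1 : ℝ) ^ k * (n.choose k : ℝ) * (k : ℝ) ^ m = 0 := by
  induction m using Nat.strong_induction_on with
  | _ m ih =>
    intro n hmn
    match m, n, hmn with
    | 0, n, hmn =>
      have h := Int.alternating_sum_range_choose (n := n)
      rw [if_neg (by omega : n ≠ 0)] at h
      have := congrArg (fun z : ℤ => (z : ℝ)) h
      push_cast at this ⊢
      simpa [pow_zero, mul_one] using this
    | (m' + 1), (n' + 1), hmn =>
      have hm' : m' < n' := Nat.lt_of_succ_lt_succ hmn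
      rw [Finset.sum_range_succ'] -- peels off k = 0
      simp only [pow_zero, Nat.cast_zero, mul_zero, zero_pow (Nat.succ_ne_zero m'), add_zero]
      have key : ∀ j : ℕ, (-1 : ℝ) ^ (j + 1) * ((n' + 1).choose (j + 1) : ℝ) * ((j + 1 : ℕ) : ℝ) ^ (m' + 1)
          = -((n' + 1 : ℝ)) * ((-1 : ℝ) ^ j * (n'.choose j : ℝ) * ((j + 1 : ℕ) : ℝ) ^ m') := by
        intro j
        have hch : ((n' + 1) * n'.choose j : ℝ) = ((n' + 1).choose (j + 1) : ℝ) * (j + 1) := by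
          exact_mod_cast congrArg (fun x : ℕ => (x : ℝ)) (Nat.add_one_mul_choose_eq n' j)
        have : ((j + 1 : ℕ) : ℝ) ^ (m' + 1) = ((j + 1 : ℕ) : ℝ) ^ m' * (j + 1) := by
          push_cast; ring
        rw [this]
        rw [pow_succ (-1 : ℝ) j]
        push_cast at hch ⊢
        linear_combination ((-1 : ℝ) ^ j * ((j : ℝ) + 1) ^ m') * hch
      rw [Finset.sum_congr rfl (fun j _ => key j)]
      rw [← Finset.mul_sum]
      have expand : ∀ j : ℕ, ((j + 1 : ℕ) : ℝ) ^ m' = ∑ i ∈ range (m' + 1), (m'.choose i : ℝ) * (j : ℝ) ^ i := by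
        intro j
        push_cast
        rw [add_pow]
        refine Finset.sum_congr rfl fun i hi => ?_
        simp [one_pow]
        ring
      have : ∑ j ∈ range (n' + 1), (-1 : ℝ) ^ j * (n'.choose j : ℝ) * ((j + 1 : ℕ) : ℝ) ^ m' = 0 := by
        calc ∑ j ∈ range (n' + 1), (-1 : ℝ) ^ j * (n'.choose j : ℝ) * ((j + 1 : ℕ) : ℝ) ^ m'
            = ∑ j ∈ range (n' + 1), ∑ i ∈ range (m' + 1), (m'.choose i : ℝ) * ((-1 : ℝ) ^ j * (n'.choose j : ℝ) * (j : ℝ) ^ i) := by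
              refine Finset.sum_congr rfl fun j _ => ?_
              rw [expand j, Finset.mul_sum]
              refine Finset.sum_congr rfl fun i _ => ?_
              ring
          _ = ∑ i ∈ range (m' + 1), (m'.choose i : ℝ) * ∑ j ∈ range (n' + 1), (-1 : ℝ) ^ j * (n'.choose j : ℝ) * (j : ℝ) ^ i := by
              rw [Finset.sum_comm]
              refine Finset.sum_congr rfl fun i _ => ?_
              rw [Finset.mul_sum]
          _ = 0 := by
              refine Finset.sum_eq_zero fun i hi => ?_
              have hi' := Finset.mem_range.mp hi
              rw [ih i (by omega) n' (by omega)]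
              ring
      rw [this, mul_zero]

lemma aux_chooseR (n k : ℕ) :
    (((n+1).choose k : ℝ)) * ((n + 1 - k : ℕ) : ℝ) = ((n+1 : ℕ) : ℝ) * (n.choose k : ℝ) := by
  have h : (n+1).choose k * (n + 1 - k) = (n+1) * n.choose k := by
    have h1 := Nat.choose_succ_right_eq (n+1) k
    have h2 := Nat.add_one_mul_choose_eq n k
    exact h1.symm.trans h2.symm
  exact_mod_cast congrArg (fun x : ℕ => (x : ℝ)) h

/-- Evaluation of the shifted tree sum at `-(s+n)` vanishes (for `n ≥ 2`). -/
lemma aux_treeEval (n : ℕ) (hn : 2 ≤ n) (s : ℕ) :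
    ∑ k ∈ range (n + 1), (n.choose k : ℝ) * tR k * (-(((s + n : ℕ)) : ℝ) + ((s + n - k : ℕ) : ℝ)) ^ (n - k) = 0 := by
  have key : ∀ k ∈ range (n + 1),
      (n.choose k : ℝ) * tR k * (-(((s + n : ℕ)) : ℝ) + ((s + n - k : ℕ) : ℝ)) ^ (n - k)
        = (-1 : ℝ) ^ n * ((-1 : ℝ) ^ k * (n.choose k : ℝ) * (k : ℝ) ^ (n - 1)) := by
    intro k hk
    have hk' : k ≤ n := Nat.lt_succ_iff.mp (Finset.mem_range.mp hk)
    have hcast : (-(((s + n : ℕ)) : ℝ) + ((s + n - k : ℕ) : ℝ)) = -(k : ℝ) := by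
      have : ((s + n - k : ℕ) : ℝ) = ((s + n : ℕ) : ℝ) - (k : ℝ) := by
        rw [Nat.cast_sub (by omega)]
      rw [this]; ring
    rw [hcast]
    rcases Nat.eq_zero_or_pos k with rfl | hkpos
    · simp [tR, zero_pow (by omega : n - 1 ≠ 0), zero_pow (by omega : n - 0 ≠ 0)]
    · have htR : tR k = (k : ℝ) ^ (k - 1) := by unfold tR; rw [if_neg (by omega)]
      rw [htR, neg_pow]
      have hpow : (k : ℝ) ^ (k - 1) * (k : ℝ) ^ (n - k) = (k : ℝ) ^ (n - 1) := by
        rw [← pow_add]; congr 1; omega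
      have hsign : (-1 : ℝ) ^ (n - k) = (-1 : ℝ) ^ n * (-1 : ℝ) ^ k := by
        have : (-1 : ℝ) ^ (n - k) * (-1 : ℝ) ^ k = (-1 : ℝ) ^ n := by
          rw [← pow_add]; congr 1; omega
        have hk2 : ((-1 : ℝ) ^ k) * ((-1 : ℝ) ^ k) = 1 := by
          rw [← pow_add, ← two_mul, pow_mul]; norm_num
        linear_combination ((-1 : ℝ) ^ k) * this - ((-1 : ℝ) ^ (n - k)) * hk2
      calc (n.choose k : ℝ) * (k : ℝ) ^ (k - 1) * ((-1 : ℝ) ^ (n - k) * (k : ℝ) ^ (n - k))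
          = (-1 : ℝ) ^ (n - k) * ((n.choose k : ℝ) * ((k : ℝ) ^ (k - 1) * (k : ℝ) ^ (n - k))) := by ring
        _ = (-1 : ℝ) ^ n * ((-1 : ℝ) ^ k * (n.choose k : ℝ) * (k : ℝ) ^ (n - 1)) := by
            rw [hpow, hsign]; ring
  rw [Finset.sum_congr rfl key, ← Finset.mul_sum, aux_findiff (n - 1) n (by omega), mul_zero]

open Polynomial in
/-- Shifted Hurwitz/Abel tree identity as polynomials. -/
lemma aux_treePoly : ∀ n : ℕ, 1 ≤ n → ∀ s : ℕ,
    (∑ k ∈ range (n + 1), C ((n.choose k : ℝ) * tR k) * (X + C ((s + n - k : ℕ) : ℝ)) ^ (n - k))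
      = C (n : ℝ) * (X + C ((s + n : ℕ) : ℝ)) ^ (n - 1) := by
  intro n hn
  induction n, hn using Nat.le_induction with
  | base =>
    intro s
    rw [Finset.sum_range_succ, Finset.sum_range_one]
    norm_num [tR]
  | succ n hn ih =>
    intro s
    have hd : derivative
        ((∑ k ∈ range (n + 1 + 1), C (((n+1).choose k : ℝ) * tR k) * (X + C ((s + (n+1) - k : ℕ) : ℝ)) ^ (n + 1 - k))
          - C ((n+1 : ℕ) : ℝ) * (X + C ((s + (n+1) : ℕ) : ℝ)) ^ (n + 1 - 1)) = 0 := by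
      rw [derivative_sub, derivative_sum]
      have hdL : ∀ k ∈ range (n + 1 + 1),
          derivative (C (((n+1).choose k : ℝ) * tR k) * (X + C ((s + (n+1) - k : ℕ) : ℝ)) ^ (n + 1 - k))
            = C ((n+1 : ℕ) : ℝ) * (C ((n.choose k : ℝ) * tR k) * (X + C (((s+1) + n - k : ℕ) : ℝ)) ^ (n - k)) := by
        intro k hk
        have hk' : k ≤ n + 1 := Nat.lt_succ_iff.mp (Finset.mem_range.mp hk)
        rcases eq_or_ne k (n+1) with rfl | hkn
        · rw [Nat.sub_self, pow_zero, mul_one, derivative_C]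
          rw [Nat.choose_succ_self, Nat.cast_zero, zero_mul, C_0, zero_mul, mul_zero]
        · have he1 : n + 1 - k - 1 = n - k := by omega
          have he2 : (s + (n+1) - k) = ((s+1) + n - k) := by omega
          rw [derivative_mul, derivative_C, zero_mul, zero_add, derivative_pow,
            derivative_add, derivative_X, derivative_C, add_zero, mul_one, he1, he2]
          rw [← mul_assoc, ← mul_assoc, ← C_mul, ← C_mul]
          congr 2
          linear_combination (tR k) * aux_chooseR n k
      rw [Finset.sum_congr rfl hdL, ← Finset.mul_sum, Finset.sum_range_succ,
        Nat.choose_succ_self, Nat.cast_zero, zero_mul, C_0, zero_mul, add_zero, ih (s + 1)]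
      have he3 : ((s+1) + n : ℕ) = (s + (n+1) : ℕ) := by omega
      rw [he3]
      rw [derivative_mul, derivative_C, zero_mul, zero_add, derivative_pow,
        derivative_add, derivative_X, derivative_C, add_zero, mul_one]
      rw [Nat.add_sub_cancel]
      ring
    have hC := eq_C_of_derivative_eq_zero hd
    have heval : Polynomial.eval (-(((s + (n+1) : ℕ)) : ℝ))
        ((∑ k ∈ range (n + 1 + 1), C (((n+1).choose k : ℝ) * tR k) * (X + C ((s + (n+1) - k : ℕ) : ℝ)) ^ (n + 1 - k))
          - C ((n+1 : ℕ) : ℝ) * (X + C ((s + (n+1) : ℕ) : ℝ)) ^ (n + 1 - 1)) = 0 := by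
      rw [eval_sub, eval_finset_sum]
      simp only [eval_mul, eval_C, eval_pow, eval_add, eval_X]
      rw [aux_treeEval (n+1) (by omega) s]
      rw [neg_add_cancel, zero_pow (by omega : n + 1 - 1 ≠ 0), mul_zero, sub_zero]
    rw [hC, eval_C] at heval
    rw [heval, map_zero, sub_eq_zero] at hC
    exact hC

open Polynomial in
/-- The key numerical identity: `∑ k C(n,k) k^(k-1) (n-k)^(n-k) = n^n`. -/
lemma aux_treeNum (n : ℕ) (hn : 1 ≤ n) :
    ∑ k ∈ range (n + 1), (n.choose k : ℝ) * tR k * ((n - k : ℕ) : ℝ) ^ (n - k) = (n : ℝ) ^ n := by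
  have h := congrArg (Polynomial.eval (0 : ℝ)) (aux_treePoly n hn 0)
  simp only [Polynomial.eval_finset_sum, Polynomial.eval_mul, Polynomial.eval_C,
    Polynomial.eval_pow, Polynomial.eval_add, Polynomial.eval_X, zero_add, Nat.zero_add] at h
  rw [h]
  have : (n : ℝ) ^ n = (n : ℝ) * (n : ℝ) ^ (n - 1) := by
    rw [← pow_succ']; congr 1; omega
  rw [this]

/-- EGF form: `∑_{k} t_k a_{n-k} = a_n` for `n ≥ 1`. -/
lemma aux_treeEGF (n : ℕ) (hn : 1 ≤ n) :
    ∑ k ∈ range (n + 1), tS k * aS (n - k) = aS n := by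
  have hfac : (n.factorial : ℝ) ≠ 0 := Nat.cast_ne_zero.mpr n.factorial_ne_zero
  have key : ∀ k ∈ range (n + 1), tS k * aS (n - k)
      = (n.choose k : ℝ) * tR k * ((n - k : ℕ) : ℝ) ^ (n - k) / (n.factorial : ℝ) := by
    intro k hk
    have hk' : k ≤ n := Nat.lt_succ_iff.mp (Finset.mem_range.mp hk)
    have hkf : ((k.factorial : ℝ)) ≠ 0 := Nat.cast_ne_zero.mpr k.factorial_ne_zero
    have hnkf : (((n - k).factorial : ℝ)) ≠ 0 := Nat.cast_ne_zero.mpr (n - k).factorial_ne_zero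
    rw [Nat.cast_choose ℝ hk']
    unfold tS aS
    field_simp
  rw [Finset.sum_congr rfl key, ← Finset.sum_div, aux_treeNum n hn]
  unfold aS
  rfl

noncomputable def Aps : PowerSeries ℝ := PowerSeries.mk aS
noncomputable def Tps : PowerSeries ℝ := PowerSeries.mk tS

open PowerSeries in
lemma aux_hTA : Tps * Aps = Aps - 1 := by
  ext n
  rw [map_sub, PowerSeries.coeff_mul, Finset.Nat.sum_antidiagonal_eq_sum_range_succ_mk]
  simp only [Aps, Tps, coeff_mk, PowerSeries.coeff_one]
  rcases Nat.eq_zero_or_pos n with rfl | hn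
  · simp [aux_tS_zero, aux_aS_zero]
  · rw [aux_treeEGF n hn, if_neg (by omega)]
    ring

open PowerSeries in
lemma aux_hXT : X * d⁄dX ℝ Tps = Aps - 1 := by
  ext n
  rw [map_sub]
  cases n with
  | zero => simp [Aps, aux_aS_zero]
  | succ m =>
    rw [PowerSeries.coeff_succ_X_mul, PowerSeries.coeff_derivative]
    simp only [Aps, Tps, coeff_mk, PowerSeries.coeff_one, if_neg (Nat.succ_ne_zero m), sub_zero]
    unfold tS tR aS
    rw [if_neg (Nat.succ_ne_zero m)]
    have hf : ((m + 1).factorial : ℝ) ≠ 0 := Nat.cast_ne_zero.mpr (m+1).factorial_ne_zero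
    field_simp
    rw [Nat.add_sub_cancel]; push_cast; ring

open PowerSeries in
lemma aux_hXA : X * d⁄dX ℝ Aps = (Aps - 1) * Aps ^ 2 := by
  have h1 : (1 - Tps) * Aps = 1 := by linear_combination -aux_hTA
  have hDA : d⁄dX ℝ Aps = Tps * d⁄dX ℝ Aps + Aps * d⁄dX ℝ Tps := by
    have hA' : Aps = 1 + Tps * Aps := by linear_combination -aux_hTA
    calc d⁄dX ℝ Aps = d⁄dX ℝ (1 + Tps * Aps) := by rw [← hA']
      _ = Tps * d⁄dX ℝ Aps + Aps * d⁄dX ℝ Tps := by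
          rw [map_add, Derivation.leibniz, smul_eq_mul, smul_eq_mul]
          simp
  have h2 : (1 - Tps) * (X * d⁄dX ℝ Aps) = Aps * (Aps - 1) := by
    linear_combination X * hDA + Aps * aux_hXT
  linear_combination Aps * h2 - (X * d⁄dX ℝ Aps) * h1

open PowerSeries in
lemma aux_hXAK (K : ℕ) (hK : 1 ≤ K) :
    X * d⁄dX ℝ (Aps ^ K) = (K : ℝ⟦X⟧) * (Aps ^ (K + 2) - Aps ^ (K + 1)) := by
  rw [Derivation.leibniz_pow, nsmul_eq_mul, smul_eq_mul]
  have hpow : Aps ^ (K - 1) * ((Aps - 1) * Aps ^ 2) = Aps ^ (K + 2) - Aps ^ (K + 1) := by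
    have : Aps ^ (K - 1) * Aps ^ 2 = Aps ^ (K + 1) := by
      rw [← pow_add]; congr 1; omega
    calc Aps ^ (K - 1) * ((Aps - 1) * Aps ^ 2)
        = (Aps - 1) * (Aps ^ (K - 1) * Aps ^ 2) := by ring
      _ = (Aps - 1) * Aps ^ (K + 1) := by rw [this]
      _ = Aps ^ (K + 2) - Aps ^ (K + 1) := by ring
  calc X * ((K : ℝ⟦X⟧) * (Aps ^ (K - 1) * d⁄dX ℝ Aps))
      = (K : ℝ⟦X⟧) * (Aps ^ (K - 1) * (X * d⁄dX ℝ Aps)) := by ring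
    _ = (K : ℝ⟦X⟧) * (Aps ^ (K - 1) * ((Aps - 1) * Aps ^ 2)) := by rw [aux_hXA]
    _ = (K : ℝ⟦X⟧) * (Aps ^ (K + 2) - Aps ^ (K + 1)) := by rw [hpow]

open PowerSeries in
/-- Coefficient-level recurrence. -/
lemma aux_coeffRec (n K : ℕ) (hn : 1 ≤ n) (hK : 1 ≤ K) :
    (n : ℝ) * PowerSeries.coeff (R := ℝ) n (Aps ^ K)
      = (K : ℝ) * (PowerSeries.coeff (R := ℝ) n (Aps ^ (K + 2)) - PowerSeries.coeff (R := ℝ) n (Aps ^ (K + 1))) := by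
  have h := congrArg (PowerSeries.coeff (R := ℝ) n) (aux_hXAK K hK)
  obtain ⟨m, rfl⟩ : ∃ m, n = m + 1 := ⟨n - 1, by omega⟩
  rw [PowerSeries.coeff_succ_X_mul, PowerSeries.coeff_derivative] at h
  have hcast : ((K : ℕ) : ℝ⟦X⟧) = PowerSeries.C ((K : ℕ) : ℝ) := by
    rw [map_natCast]
  rw [hcast, PowerSeries.coeff_C_mul, map_sub] at h
  push_cast
  linear_combination h

lemma aux_peel (f : ℕ → ℝ) (K n : ℕ) :
    ∑ c ∈ Finset.Nat.antidiagonalTuple (K + 1) n, ∏ i, f (c i)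
      = ∑ pq ∈ Finset.HasAntidiagonal.antidiagonal n, f pq.1 * ∑ d ∈ Finset.Nat.antidiagonalTuple K pq.2, ∏ i, f (d i) := by
  have : ∀ pq ∈ Finset.HasAntidiagonal.antidiagonal n, f pq.1 * ∑ d ∈ Finset.Nat.antidiagonalTuple K pq.2, ∏ i, f (d i)
      = ∑ d ∈ Finset.Nat.antidiagonalTuple K pq.2, ∏ i : Fin (K + 1), f ((Fin.cons pq.1 d : Fin (K+1) → ℕ) i) := by
    intro pq _
    rw [Finset.mul_sum]
    refine Finset.sum_congr rfl fun d _ => ?_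
    rw [Fin.prod_univ_succ]
    simp [Fin.cons_zero, Fin.cons_succ]
  rw [Finset.sum_congr rfl this, Finset.sum_sigma']
  refine Finset.sum_nbij' (fun c => ⟨(c 0, ∑ i : Fin K, c i.succ), Fin.tail c⟩)
    (fun p => (Fin.cons p.1.1 p.2 : Fin (K+1) → ℕ)) ?_ ?_ ?_ ?_ ?_
  · intro c hc
    simp only [Finset.Nat.mem_antidiagonalTuple] at hc
    simp only [Finset.mem_sigma, Finset.HasAntidiagonal.mem_antidiagonal, Finset.Nat.mem_antidiagonalTuple]
    constructor
    · rw [← hc, Fin.sum_univ_succ]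
    · rfl
  · intro p hp
    simp only [Finset.mem_sigma, Finset.HasAntidiagonal.mem_antidiagonal, Finset.Nat.mem_antidiagonalTuple] at hp
    simp only [Finset.Nat.mem_antidiagonalTuple]
    rw [Fin.sum_univ_succ]
    simp only [Fin.cons_zero, Fin.cons_succ]
    rw [hp.2, hp.1]
  · intro c hc
    exact Fin.cons_self_tail c
  · intro p hp
    simp only [Finset.mem_sigma, Finset.HasAntidiagonal.mem_antidiagonal, Finset.Nat.mem_antidiagonalTuple] at hp
    refine Sigma.ext ?_ ?_
    · simp only [Fin.cons_zero, Fin.cons_succ]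
      exact Prod.ext rfl hp.2
    · simp [Fin.tail_cons]
  · intro p hp
    simp [Fin.cons_self_tail]

open PowerSeries in
lemma aux_coeff_pow_A (K n : ℕ) :
    PowerSeries.coeff (R := ℝ) n (Aps ^ K) = ∑ c ∈ Finset.Nat.antidiagonalTuple K n, ∏ i, aS (c i) := by
  induction K generalizing n with
  | zero =>
    rw [pow_zero, PowerSeries.coeff_one]
    cases n with
    | zero => simp [Finset.Nat.antidiagonalTuple_zero_zero]
    | succ m => simp [Finset.Nat.antidiagonalTuple_zero_succ]
  | succ K ih =>
    rw [pow_succ', PowerSeries.coeff_mul, aux_peel aS K n]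
    refine Finset.sum_congr rfl fun pq _ => ?_
    rw [ih pq.2]
    simp [Aps, coeff_mk]

/-- The parametric complexity (NML normalizer) of a `K`-bin multinomial/histogram model
with `n` observations: `R(n,K) = Σ_{c_1+…+c_K=n} n!/(c_1!⋯c_K!) ∏_i (c_i/n)^{c_i}`
(convention `0^0 = 1`). -/
noncomputable def parametricComplexity (n K : ℕ) : ℝ :=
  ∑ c ∈ Finset.Nat.antidiagonalTuple K n,
    ((n.factorial : ℝ) / ∏ i, ((c i).factorial : ℝ)) * ∏ i, ((c i : ℝ) / n) ^ (c i)


lemma aux_pc_eq (n K : ℕ) (hn : 1 ≤ n) :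
    parametricComplexity n K
      = ((n.factorial : ℝ) / (n : ℝ) ^ n) * ∑ c ∈ Finset.Nat.antidiagonalTuple K n, ∏ i, aS (c i) := by
  unfold parametricComplexity
  rw [Finset.mul_sum]
  refine Finset.sum_congr rfl fun c hc => ?_
  have hc' : ∑ i, c i = n := Finset.Nat.mem_antidiagonalTuple.mp hc
  have h1 : ∏ i, ((c i : ℝ) / n) ^ (c i) = (∏ i, (c i : ℝ) ^ (c i)) / (n : ℝ) ^ n := by
    simp only [div_pow]
    rw [Finset.prod_div_distrib, Finset.prod_pow_eq_pow_sum, hc']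
  have h2 : ∏ i, aS (c i) = (∏ i, (c i : ℝ) ^ (c i)) / ∏ i, ((c i).factorial : ℝ) := by
    unfold aS
    rw [Finset.prod_div_distrib]
  rw [h1, h2]
  ring

/-- The parametric complexity satisfies `R(n,1) = 1` and the recurrence
`R(n,K+2) = R(n,K+1) + (n/K)·R(n,K)` for all `K ≥ 1`. -/
theorem stmt16 (n : ℕ) (hn : 1 ≤ n) :
    parametricComplexity n 1 = 1 ∧
      ∀ K : ℕ, 1 ≤ K →
        parametricComplexity n (K + 2)
          = parametricComplexity n (K + 1) + ((n : ℝ) / K) * parametricComplexity n K := by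
  have hnR : (n : ℝ) ≠ 0 := Nat.cast_ne_zero.mpr (by omega)
  have hfacR : (n.factorial : ℝ) ≠ 0 := Nat.cast_ne_zero.mpr n.factorial_ne_zero
  constructor
  · unfold parametricComplexity
    rw [Finset.Nat.antidiagonalTuple_one, Finset.sum_singleton]
    simp only [Fin.prod_univ_one, Matrix.cons_val_zero]
    rw [div_self hnR, one_pow, div_self hfacR, one_mul]
  · intro K hK
    have hKR : (K : ℝ) ≠ 0 := Nat.cast_ne_zero.mpr (by omega)
    have hrec := aux_coeffRec n K hn hK
    rw [aux_coeff_pow_A, aux_coeff_pow_A, aux_coeff_pow_A] at hrec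
    rw [aux_pc_eq n (K + 2) hn, aux_pc_eq n (K + 1) hn, aux_pc_eq n K hn]
    have h2 : (∑ c ∈ Finset.Nat.antidiagonalTuple (K + 2) n, ∏ i, aS (c i))
        = (∑ c ∈ Finset.Nat.antidiagonalTuple (K + 1) n, ∏ i, aS (c i))
          + ((n : ℝ) / K) * ∑ c ∈ Finset.Nat.antidiagonalTuple K n, ∏ i, aS (c i) := by
      field_simp
      linear_combination -hrec
    linear_combination ((n.factorial : ℝ) / (n : ℝ) ^ n) * h2
end
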